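/- Let d be a real number with d > t-1 and for each partition λ = (λ_1 ≥ ... ≥ λ_k) of t define c_λ(d) = d^{-t} ∏_{i=1}^{k} ∏_{j=1}^{λ_i} (d + j - i). If t ≤ d, then among all partitions λ of t, c_λ(d) is minimized by the all-ones partition (1,1,...,1), for which c_{(1^t)}(d) = d^{-t} · d(d-1)···(d-t+1). -/

import Mathlib

/-- The normalized content product `c_λ(d) = d^{-t} ∏_{(i,j)∈λ} (d + j - i)`,
with the partition given as a list of row lengths (0-indexed cells). -/
noncomputable def contentProd (t : ℕ) (L : List ℕ) (d : ℝ) : ℝ :=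
  d ^ (-(t : ℤ)) *
    ∏ i ∈ Finset.range L.length, ∏ j ∈ Finset.range (L.getD i 0), (d + (j : ℝ) - (i : ℝ))

lemma flatten_prod : ∀ (L : List ℕ) (f : ℕ → ℝ),
    ∏ i ∈ Finset.range L.length, ∏ j ∈ Finset.range (L.getD i 0), f ((L.take i).sum + j)
      = ∏ m ∈ Finset.range L.sum, f m
  | [], f => by simp
  | a :: L, f => by
    rw [List.length_cons, Finset.prod_range_succ', List.sum_cons, Finset.prod_range_add]
    simp only [List.getD_cons_succ, List.take_succ_cons, List.sum_cons, List.getD_cons_zero,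
      List.take_zero, List.sum_nil, Nat.zero_add]
    rw [mul_comm]
    congr 1
    rw [← flatten_prod L (fun m => f (a + m))]
    apply Finset.prod_congr rfl
    intro i _
    apply Finset.prod_congr rfl
    intro j _
    congr 1
    omega

lemma length_le_sum : ∀ (l : List ℕ), (∀ a ∈ l, 0 < a) → l.length ≤ l.sum
  | [], _ => le_refl _
  | a :: l, h => by
    have := length_le_sum l (fun b hb => h b (List.mem_cons_of_mem _ hb))
    have := h a (List.mem_cons_self)
    simp only [List.length_cons, List.sum_cons]
    omega

/-- when `t ≤ d`, among all partitions `L` of `t`, the content product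
`c_λ(d)` is minimized by the all-ones partition `(1,…,1)`, whose value is
`d^{-t} · d(d-1)⋯(d-t+1)`. -/
theorem stmt_11 (t : ℕ) (ht : 0 < t) (d : ℝ) (hd : (t : ℝ) ≤ d)
    (L : List ℕ) (hsort : L.Pairwise (· ≥ ·)) (hpos : ∀ a ∈ L, 0 < a) (hsum : L.sum = t) :
    contentProd t (List.replicate t 1) d ≤ contentProd t L d ∧
      contentProd t (List.replicate t 1) d
        = d ^ (-(t : ℤ)) * ∏ i ∈ Finset.range t, (d - (i : ℝ)) := by
  have ht1 : (1:ℝ) ≤ (t:ℝ) := by exact_mod_cast ht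
  have hd0 : 0 < d := by linarith
  -- value of the all-ones partition
  have heq : contentProd t (List.replicate t 1) d
      = d ^ (-(t : ℤ)) * ∏ i ∈ Finset.range t, (d - (i : ℝ)) := by
    unfold contentProd
    congr 1
    rw [List.length_replicate]
    apply Finset.prod_congr rfl
    intro i hi
    have : (List.replicate t 1).getD i 0 = 1 := by
      rw [List.getD_eq_getElem _ _ (by simpa using Finset.mem_range.mp hi)]
      simp
    rw [this]
    simp
  refine ⟨?_, heq⟩
  rw [heq]
  unfold contentProd
  apply mul_le_mul_of_nonneg_left _ (zpow_nonneg hd0.le _)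
  -- key facts about prefix sums
  have hMi : ∀ i, i ≤ L.length → i ≤ (L.take i).sum := by
    intro i hi
    have hlen : (L.take i).length = i := by simp [hi]
    have := length_le_sum (L.take i) (fun a ha => hpos a (List.mem_of_mem_take ha))
    omega
  have hlt : ∀ i ∈ Finset.range L.length, ∀ j ∈ Finset.range (L.getD i 0),
      (L.take i).sum + j < t := by
    intro i hi j hj
    rw [Finset.mem_range] at hi hj
    have hget : L.getD i 0 = L.get ⟨i, hi⟩ := by
      rw [List.getD_eq_getElem _ _ hi]; rfl
    have hstep : (L.take (i+1)).sum = (L.take i).sum + L.get ⟨i, hi⟩ :=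
      List.sum_take_succ L i hi
    have hle : (L.take (i+1)).sum ≤ L.sum := by
      conv_rhs => rw [← List.take_append_drop (i+1) L]
      rw [List.sum_append]
      omega
    omega
  -- the flattened product of (d - m)
  rw [show ∏ i ∈ Finset.range t, (d - (i : ℝ))
      = ∏ i ∈ Finset.range L.length, ∏ j ∈ Finset.range (L.getD i 0),
          (d - (((L.take i).sum + j : ℕ) : ℝ)) by
    rw [flatten_prod L (fun m => d - (m : ℝ)), hsum]]
  apply Finset.prod_le_prod
  · intro i hi
    apply Finset.prod_nonneg
    intro j hj
    have := hlt i hi j hj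
    have : (((L.take i).sum + j : ℕ) : ℝ) < (t : ℝ) := by exact_mod_cast this
    linarith
  · intro i hi
    apply Finset.prod_le_prod
    · intro j hj
      have := hlt i hi j hj
      have : (((L.take i).sum + j : ℕ) : ℝ) < (t : ℝ) := by exact_mod_cast this
      linarith
    · intro j hj
      have hi' := Finset.mem_range.mp hi
      have hM := hMi i hi'.le
      have : (i : ℝ) ≤ (((L.take i).sum : ℕ) : ℝ) := by exact_mod_cast hM
      push_cast at this ⊢
      linarith
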